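/- Fix a nonzero complex number ℏ and complex numbers δ, δ′, c with (1+c)² ≠ δδ′ and (1−c)² ≠ δδ′, set Δ(t) = e^t + e^{−t} − c(e^t − e^{−t}) and D(t) = Δ(t)² − (e^t − e^{−t})²·δδ′, and assume D(s) ≠ 0 for every real s. Let g : ℝ → ℂ be the continuous function with g(s)² = D(s) and g(0) = 2, and define G(t,u,v) = (2/g(t/2))·exp( (1/(iℏ))·((e^{t/2} − e^{−t/2})/D(t/2))·( (e^{t/2} − e^{−t/2})(δ′u² + δv²) + 2Δ(t/2)uv ) ). Then the limit w̄ = lim_{s→+∞} e^{−s} g(s) exists and satisfies w̄² = (1−c)² − δδ′, and, uniformly on compact subsets of ℂ², lim_{t→+∞} e^{t/2} G(t,u,v) = (2/w̄)·exp( (1/(iℏ))·(δ′u² + 2(1−c)uv + δv²)/((1−c)² − δδ′) ) and lim_{t→−∞} e^{t/2} G(t,u,v) = 0. -/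

import Mathlib

open Complex Filter

lemma cexp_tendsto_zero {l : Filter ℝ} {r : ℝ → ℝ} (h : Tendsto r l atBot) :
    Tendsto (fun s => Complex.exp ((r s : ℂ))) l (nhds 0) := by
  rw [tendsto_zero_iff_norm_tendsto_zero]
  have he : ∀ s, ‖Complex.exp ((r s : ℂ))‖ = Real.exp (r s) := fun s => by
    rw [Complex.norm_exp]; simp
  simp only [he]
  exact Real.tendsto_exp_atBot.comp h

lemma tendsto_of_near (h : ℝ → ℂ) (L r : ℂ) (hr : r ≠ 0) (hr2 : r ^ 2 = L)
    (ht : Tendsto (fun s => (h s) ^ 2) atTop (nhds L)) (T : ℝ)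
    (hnear : ∀ s ≥ T, ‖h s - r‖ < ‖r‖) : Tendsto h atTop (nhds r) := by
  have hrpos : 0 < ‖r‖ := norm_pos_iff.2 hr
  have hbound : ∀ s ≥ T, ‖h s - r‖ ≤ ‖h s ^ 2 - L‖ / ‖r‖ := by
    intro s hs
    have h1 : ‖r‖ < ‖h s + r‖ := by
      have h2r : (2 : ℝ) * ‖r‖ ≤ ‖h s + r‖ + ‖h s - r‖ := by
        calc (2:ℝ) * ‖r‖ = ‖(h s + r) - (h s - r)‖ := by
              rw [show (h s + r) - (h s - r) = 2 * r by ring, norm_mul]; simp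
          _ ≤ ‖h s + r‖ + ‖h s - r‖ := norm_sub_le _ _
      have := hnear s hs
      linarith
    have hfac : h s ^ 2 - L = (h s - r) * (h s + r) := by rw [← hr2]; ring
    rw [hfac, norm_mul, le_div_iff₀ hrpos]
    exact mul_le_mul_of_nonneg_left h1.le (norm_nonneg _)
  have hz : Tendsto (fun s => ‖h s ^ 2 - L‖ / ‖r‖) atTop (nhds 0) := by
    have h0 : Tendsto (fun s => h s ^ 2 - L) atTop (nhds 0) := by
      simpa using ht.sub_const L
    simpa using h0.norm.div_const ‖r‖
  have : Tendsto (fun s => ‖h s - r‖) atTop (nhds 0) :=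
    squeeze_zero' (Eventually.of_forall fun s => norm_nonneg _)
      (eventually_atTop.2 ⟨T, hbound⟩) hz
  exact tendsto_iff_norm_sub_tendsto_zero.2 this

lemma sqrt_limit (h : ℝ → ℂ) (hc : Continuous h) (L : ℂ) (hL : L ≠ 0)
    (ht : Tendsto (fun s => (h s) ^ 2) atTop (nhds L)) :
    ∃ w : ℂ, w ≠ 0 ∧ w ^ 2 = L ∧ Tendsto h atTop (nhds w) := by
  set r := Complex.exp (Complex.log L / 2) with hrdef
  have hr : r ≠ 0 := Complex.exp_ne_zero _
  have hr2 : r ^ 2 = L := by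
    rw [hrdef, pow_two, ← Complex.exp_add, add_halves, Complex.exp_log hL]
  have hrpos : 0 < ‖r‖ := norm_pos_iff.2 hr
  obtain ⟨T, hT⟩ : ∃ T, ∀ s ≥ T, ‖h s ^ 2 - L‖ < ‖r‖ ^ 2 := by
    have hev := Metric.tendsto_nhds.mp ht (‖r‖ ^ 2) (by positivity)
    exact eventually_atTop.1 (hev.mono fun s hs => by rwa [dist_eq_norm] at hs)
  have hu : IsOpen {s : ℝ | ‖h s - r‖ < ‖r‖} :=
    isOpen_lt (Continuous.norm (hc.sub continuous_const)) continuous_const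
  have hv : IsOpen {s : ℝ | ‖h s + r‖ < ‖r‖} :=
    isOpen_lt (Continuous.norm (hc.add continuous_const)) continuous_const
  have hdisj : Disjoint {s : ℝ | ‖h s - r‖ < ‖r‖} {s : ℝ | ‖h s + r‖ < ‖r‖} := by
    rw [Set.disjoint_left]
    intro s hsu hsv
    simp only [Set.mem_setOf_eq] at hsu hsv
    have h2r : (2 : ℝ) * ‖r‖ ≤ ‖h s + r‖ + ‖h s - r‖ := by
      calc (2:ℝ) * ‖r‖ = ‖(h s + r) - (h s - r)‖ := by
            rw [show (h s + r) - (h s - r) = 2 * r by ring, norm_mul]; simp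
        _ ≤ ‖h s + r‖ + ‖h s - r‖ := norm_sub_le _ _
    linarith
  have hcov : Set.Ici T ⊆ {s : ℝ | ‖h s - r‖ < ‖r‖} ∪ {s : ℝ | ‖h s + r‖ < ‖r‖} := by
    intro s hs
    by_contra hns
    simp only [Set.mem_union, Set.mem_setOf_eq, not_or, not_lt] at hns
    have hfac : h s ^ 2 - L = (h s - r) * (h s + r) := by rw [← hr2]; ring
    have : ‖r‖ ^ 2 ≤ ‖h s ^ 2 - L‖ := by
      rw [hfac, norm_mul, pow_two]
      exact mul_le_mul hns.1 hns.2 hrpos.le (norm_nonneg _)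
    exact absurd (hT s hs) (not_lt.2 this)
  rcases (isPreconnected_Ici).subset_or_subset hu hv hdisj hcov with hcase | hcase
  · exact ⟨r, hr, hr2, tendsto_of_near h L r hr hr2 ht T fun s hs => hcase hs⟩
  · refine ⟨-r, neg_ne_zero.2 hr, by rw [neg_pow]; simp [hr2], ?_⟩
    refine tendsto_of_near h L (-r) (neg_ne_zero.2 hr) (by rw [neg_pow]; simp [hr2]) ht T
      fun s hs => ?_
    have := hcase hs
    simpa [sub_neg_eq_add, norm_neg] using this

set_option maxHeartbeats 1000000 in
lemma unif_param {ι : Type*} (l : Filter ι) (F : ι → ℂ × ℂ × ℂ) (Fl : ℂ × ℂ × ℂ)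
    (hF : Tendsto F l (nhds Fl)) (H : (ℂ × ℂ × ℂ) → (ℂ × ℂ) → ℂ)
    (hH : Continuous (fun q : (ℂ × ℂ × ℂ) × (ℂ × ℂ) => H q.1 q.2))
    (Q : Set (ℂ × ℂ)) (hQ : IsCompact Q) :
    TendstoUniformlyOn (fun t p => H (F t) p) (fun p => H Fl p) l Q := by
  rw [Metric.tendstoUniformlyOn_iff]
  intro ε hε
  have hK : IsCompact (Metric.closedBall Fl 1 ×ˢ Q) := (isCompact_closedBall _ _).prod hQ
  have hUC := hK.uniformContinuousOn_of_continuous hH.continuousOn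
  rw [Metric.uniformContinuousOn_iff] at hUC
  obtain ⟨d, hd, hdd⟩ := hUC ε hε
  have hev : ∀ᶠ t in l, dist (F t) Fl < min d 1 :=
    Metric.tendsto_nhds.mp hF _ (lt_min hd one_pos)
  filter_upwards [hev] with t ht p hp
  have h1 : ((F t, p) : (ℂ × ℂ × ℂ) × (ℂ × ℂ)) ∈ Metric.closedBall Fl 1 ×ˢ Q :=
    Set.mk_mem_prod (Metric.mem_closedBall.2 (le_of_lt (lt_of_lt_of_le ht (min_le_right _ _)))) hp
  have h2 : ((Fl, p) : (ℂ × ℂ × ℂ) × (ℂ × ℂ)) ∈ Metric.closedBall Fl 1 ×ˢ Q :=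
    Set.mk_mem_prod (Metric.mem_closedBall_self zero_le_one) hp
  have hdist : dist ((Fl, p) : (ℂ × ℂ × ℂ) × (ℂ × ℂ)) (F t, p) < d := by
    rw [Prod.dist_eq]
    simp only [dist_self]
    rw [dist_comm]
    exact max_lt (lt_of_lt_of_le ht (min_le_left _ _)) hd
  have hfin := hdd _ h2 _ h1 hdist
  simpa using hfin

noncomputable def Hfun (δ δ' : ℂ) (q : ℂ × ℂ × ℂ) (p : ℂ × ℂ) : ℂ :=
  q.1 * Complex.exp (q.2.1 * (δ' * p.1 ^ 2 + δ * p.2 ^ 2) + q.2.2 * (p.1 * p.2))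

lemma Hfun_continuous (δ δ' : ℂ) :
    Continuous (fun q : (ℂ × ℂ × ℂ) × (ℂ × ℂ) => Hfun δ δ' q.1 q.2) := by
  unfold Hfun
  fun_prop

theorem statement5 (ℏ δ δ' c : ℂ) (hℏ : ℏ ≠ 0)
    (h1 : (1 + c) ^ 2 ≠ δ * δ') (h2 : (1 - c) ^ 2 ≠ δ * δ')
    (Δ D : ℂ → ℂ)
    (hΔ : ∀ t, Δ t = exp t + exp (-t) - c * (exp t - exp (-t)))
    (hD : ∀ t, D t = (Δ t) ^ 2 - (exp t - exp (-t)) ^ 2 * (δ * δ'))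
    (hDR : ∀ s : ℝ, D s ≠ 0)
    (g : ℝ → ℂ) (hgc : Continuous g) (hg2 : ∀ s : ℝ, (g s) ^ 2 = D s) (hg0 : g 0 = 2)
    (G : ℝ → ℂ → ℂ → ℂ)
    (hG : ∀ (t : ℝ) (u v : ℂ), G t u v =
      2 / g (t / 2) * exp ((1 / (Complex.I * ℏ)) *
        ((exp ((t : ℂ) / 2) - exp (-(t : ℂ) / 2)) / D ((t : ℂ) / 2)) *
        ((exp ((t : ℂ) / 2) - exp (-(t : ℂ) / 2)) * (δ' * u ^ 2 + δ * v ^ 2)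
          + 2 * Δ ((t : ℂ) / 2) * u * v))) :
    ∃ wbar : ℂ,
      Tendsto (fun s : ℝ => exp (-(s : ℂ)) * g s) atTop (nhds wbar) ∧
      wbar ^ 2 = (1 - c) ^ 2 - δ * δ' ∧
      (∀ Q : Set (ℂ × ℂ), IsCompact Q →
        TendstoUniformlyOn
          (fun (t : ℝ) (p : ℂ × ℂ) => exp ((t : ℂ) / 2) * G t p.1 p.2)
          (fun p => 2 / wbar * exp ((1 / (Complex.I * ℏ)) *
            (δ' * p.1 ^ 2 + 2 * (1 - c) * p.1 * p.2 + δ * p.2 ^ 2) /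
              ((1 - c) ^ 2 - δ * δ')))
          atTop Q ∧
        TendstoUniformlyOn
          (fun (t : ℝ) (p : ℂ × ℂ) => exp ((t : ℂ) / 2) * G t p.1 p.2)
          (fun _ => 0) atBot Q) := by
  have hgne : ∀ s : ℝ, g s ≠ 0 := by
    intro s h0
    exact hDR s (by rw [← hg2 s, h0]; norm_num)
  have e1 : ∀ s : ℝ, Complex.exp (-(s:ℂ)) * Complex.exp (s:ℂ) = 1 := by
    intro s; rw [← Complex.exp_add]; simp
  have e1' : ∀ s : ℝ, Complex.exp ((s:ℂ)) * Complex.exp (-(s:ℂ)) = 1 := by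
    intro s; rw [← Complex.exp_add]; simp
  have e2 : ∀ s : ℝ, Complex.exp (-(s:ℂ)) * Complex.exp (-(s:ℂ))
      = Complex.exp ((-(2*s) : ℝ) : ℂ) := by
    intro s; rw [← Complex.exp_add]; congr 1; push_cast; ring
  have e3 : ∀ s : ℝ, Complex.exp ((s:ℂ)) * Complex.exp ((s:ℂ))
      = Complex.exp ((2*s : ℝ) : ℂ) := by
    intro s; rw [← Complex.exp_add]; congr 1; push_cast; ring
  have hz_top : Tendsto (fun s : ℝ => Complex.exp ((-(2*s) : ℝ) : ℂ)) atTop (nhds 0) := by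
    refine cexp_tendsto_zero ?_
    exact tendsto_neg_atTop_atBot.comp (tendsto_id.const_mul_atTop two_pos)
  have hz_bot : Tendsto (fun s : ℝ => Complex.exp ((2*s : ℝ) : ℂ)) atBot (nhds 0) := by
    refine cexp_tendsto_zero ?_
    exact tendsto_id.const_mul_atBot two_pos
  have hEtop : Tendsto (fun s : ℝ => Complex.exp (-(s:ℂ))
      * (Complex.exp (s:ℂ) - Complex.exp (-(s:ℂ)))) atTop (nhds 1) := by
    have heq : (fun s : ℝ => Complex.exp (-(s:ℂ)) * (Complex.exp (s:ℂ) - Complex.exp (-(s:ℂ))))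
        = fun s : ℝ => 1 - Complex.exp ((-(2*s) : ℝ) : ℂ) := by
      funext s; linear_combination e1 s - e2 s
    rw [heq]
    simpa using tendsto_const_nhds.sub hz_top
  have hΔtop : Tendsto (fun s : ℝ => Complex.exp (-(s:ℂ)) * Δ (s:ℂ)) atTop (nhds (1 - c)) := by
    have heq : (fun s : ℝ => Complex.exp (-(s:ℂ)) * Δ (s:ℂ))
        = fun s : ℝ => 1 + Complex.exp ((-(2*s) : ℝ) : ℂ)
            - c * (1 - Complex.exp ((-(2*s) : ℝ) : ℂ)) := by
      funext s; rw [hΔ]; linear_combination (1-c) * e1 s + (1+c) * e2 s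
    rw [heq]
    have := ((tendsto_const_nhds (x := (1:ℂ))).add hz_top).sub
      ((tendsto_const_nhds (x := c)).mul ((tendsto_const_nhds (x := (1:ℂ))).sub hz_top))
    simpa using this
  have hDtop : Tendsto (fun s : ℝ => Complex.exp (-(s:ℂ)) ^ 2 * D (s:ℂ)) atTop
      (nhds ((1-c)^2 - δ*δ')) := by
    have heq : (fun s : ℝ => Complex.exp (-(s:ℂ)) ^ 2 * D (s:ℂ))
        = fun s : ℝ => (Complex.exp (-(s:ℂ)) * Δ (s:ℂ))^2
            - (Complex.exp (-(s:ℂ)) * (Complex.exp (s:ℂ) - Complex.exp (-(s:ℂ))))^2 * (δ*δ') := by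
      funext s; rw [hD]; ring
    rw [heq]
    have := (hΔtop.pow 2).sub ((hEtop.pow 2).mul (tendsto_const_nhds (x := δ*δ')))
    simpa using this
  have hEbot : Tendsto (fun s : ℝ => Complex.exp ((s:ℂ))
      * (Complex.exp (s:ℂ) - Complex.exp (-(s:ℂ)))) atBot (nhds (-1)) := by
    have heq : (fun s : ℝ => Complex.exp ((s:ℂ)) * (Complex.exp (s:ℂ) - Complex.exp (-(s:ℂ))))
        = fun s : ℝ => Complex.exp ((2*s : ℝ) : ℂ) - 1 := by
      funext s; linear_combination e3 s - e1' s
    rw [heq]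
    simpa using hz_bot.sub (tendsto_const_nhds (x := (1:ℂ)))
  have hΔbot : Tendsto (fun s : ℝ => Complex.exp ((s:ℂ)) * Δ (s:ℂ)) atBot (nhds (1 + c)) := by
    have heq : (fun s : ℝ => Complex.exp ((s:ℂ)) * Δ (s:ℂ))
        = fun s : ℝ => Complex.exp ((2*s : ℝ) : ℂ) + 1
            - c * (Complex.exp ((2*s : ℝ) : ℂ) - 1) := by
      funext s; rw [hΔ]; linear_combination (1-c) * e3 s + (1+c) * e1' s
    rw [heq]
    have := (hz_bot.add (tendsto_const_nhds (x := (1:ℂ)))).sub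
      ((tendsto_const_nhds (x := c)).mul (hz_bot.sub (tendsto_const_nhds (x := (1:ℂ)))))
    simpa using this
  have hDbot : Tendsto (fun s : ℝ => Complex.exp ((s:ℂ)) ^ 2 * D (s:ℂ)) atBot
      (nhds ((1+c)^2 - δ*δ')) := by
    have heq : (fun s : ℝ => Complex.exp ((s:ℂ)) ^ 2 * D (s:ℂ))
        = fun s : ℝ => (Complex.exp ((s:ℂ)) * Δ (s:ℂ))^2
            - (Complex.exp ((s:ℂ)) * (Complex.exp (s:ℂ) - Complex.exp (-(s:ℂ))))^2 * (δ*δ') := by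
      funext s; rw [hD]; ring
    rw [heq]
    have := (hΔbot.pow 2).sub ((hEbot.pow 2).mul (tendsto_const_nhds (x := δ*δ')))
    have hval : (1+c)^2 - δ*δ' = (1+c)^2 - (-1:ℂ)^2 * (δ*δ') := by ring
    rw [hval]
    exact this
  have hL : ((1-c)^2 - δ*δ' : ℂ) ≠ 0 := sub_ne_zero_of_ne h2
  have hL' : ((1+c)^2 - δ*δ' : ℂ) ≠ 0 := sub_ne_zero_of_ne h1
  obtain ⟨w, hw0, hw2, hwt⟩ := sqrt_limit (fun s => Complex.exp (-(s:ℂ)) * g s)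
    ((Complex.continuous_exp.comp continuous_ofReal.neg).mul hgc) _ hL (by
      have heq : (fun s : ℝ => (Complex.exp (-(s:ℂ)) * g s)^2)
          = fun s : ℝ => Complex.exp (-(s:ℂ))^2 * D (s:ℂ) := by
        funext s; rw [mul_pow, hg2]
      rw [heq]; exact hDtop)
  obtain ⟨w', hw'0, hw'2, hw't⟩ := sqrt_limit (fun u => Complex.exp (-(u:ℂ)) * g (-u))
    ((Complex.continuous_exp.comp continuous_ofReal.neg).mul (hgc.comp continuous_neg)) _ hL' (by
      have heq : (fun u : ℝ => (Complex.exp (-(u:ℂ)) * g (-u))^2)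
          = (fun s : ℝ => Complex.exp ((s:ℂ))^2 * D (s:ℂ)) ∘ (fun u : ℝ => -u) := by
        funext u
        simp only [Function.comp, Complex.ofReal_neg, neg_neg]
        rw [mul_pow, hg2]
        push_cast
        ring
      rw [heq]; exact hDbot.comp tendsto_neg_atTop_atBot)
  have hgbot : Tendsto (fun s : ℝ => Complex.exp ((s:ℂ)) * g s) atBot (nhds w') := by
    have hcomp := hw't.comp tendsto_neg_atBot_atTop
    have heq : ((fun u : ℝ => Complex.exp (-(u:ℂ)) * g (-u)) ∘ (fun s : ℝ => -s))
        = fun s : ℝ => Complex.exp ((s:ℂ)) * g s := by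
      funext s; simp [Function.comp, Complex.ofReal_neg]
    rwa [heq] at hcomp
  refine ⟨w, hwt, hw2, ?_⟩
  intro Q hQ
  have hfam : (fun (t : ℝ) (p : ℂ × ℂ) => Complex.exp ((t:ℂ)/2) * G t p.1 p.2)
      = fun (t : ℝ) (p : ℂ × ℂ) => Hfun δ δ'
          (Complex.exp ((t:ℂ)/2) * (2 / g (t/2)),
           1/(Complex.I*ℏ) * ((Complex.exp ((t:ℂ)/2) - Complex.exp (-(t:ℂ)/2))^2 / D ((t:ℂ)/2)),
           1/(Complex.I*ℏ) * (2 * (Complex.exp ((t:ℂ)/2) - Complex.exp (-(t:ℂ)/2))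
              * Δ ((t:ℂ)/2) / D ((t:ℂ)/2))) p := by
    funext t p
    rw [hG]
    unfold Hfun
    simp only
    rw [show (1/(Complex.I*ℏ) * ((Complex.exp ((t:ℂ)/2) - Complex.exp (-(t:ℂ)/2)) / D ((t:ℂ)/2)) *
          ((Complex.exp ((t:ℂ)/2) - Complex.exp (-(t:ℂ)/2)) * (δ' * p.1 ^ 2 + δ * p.2 ^ 2)
            + 2 * Δ ((t:ℂ)/2) * p.1 * p.2))
        = (1/(Complex.I*ℏ) * ((Complex.exp ((t:ℂ)/2) - Complex.exp (-(t:ℂ)/2))^2 / D ((t:ℂ)/2)))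
              * (δ' * p.1 ^ 2 + δ * p.2 ^ 2)
          + (1/(Complex.I*ℏ) * (2 * (Complex.exp ((t:ℂ)/2) - Complex.exp (-(t:ℂ)/2))
              * Δ ((t:ℂ)/2) / D ((t:ℂ)/2))) * (p.1 * p.2)
        from by ring]
    ring
  have hdiv2top : Tendsto (fun t : ℝ => t / 2) atTop atTop :=
    Tendsto.atTop_div_const two_pos tendsto_id
  have hdiv2bot : Tendsto (fun t : ℝ => t / 2) atBot atBot :=
    Tendsto.atBot_div_const two_pos tendsto_id
  -- C coefficient, atTop
  have hCtop : Tendsto (fun t : ℝ => Complex.exp ((t:ℂ)/2) * (2 / g (t/2))) atTop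
      (nhds (2 / w)) := by
    have hΦ : Tendsto (fun s : ℝ => 2 / (Complex.exp (-(s:ℂ)) * g s)) atTop (nhds (2 / w)) :=
      (tendsto_const_nhds (x := (2:ℂ))).div hwt hw0
    have hcomp := hΦ.comp hdiv2top
    have heq : ((fun s : ℝ => 2 / (Complex.exp (-(s:ℂ)) * g s)) ∘ fun t : ℝ => t / 2)
        = fun t : ℝ => Complex.exp ((t:ℂ)/2) * (2 / g (t/2)) := by
      funext t
      simp only [Function.comp]
      rw [Complex.exp_neg]
      push_cast
      field_simp
    rwa [heq] at hcomp
  -- A coefficient, atTop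
  have hψA : Tendsto (fun s : ℝ => 1/(Complex.I*ℏ)
        * ((Complex.exp ((s:ℂ)) - Complex.exp (-(s:ℂ)))^2 / D ((s:ℂ)))) atTop
      (nhds (1/(Complex.I*ℏ) * ((1:ℂ)^2 / ((1-c)^2 - δ*δ')))) := by
    have heq : (fun s : ℝ => 1/(Complex.I*ℏ)
          * ((Complex.exp ((s:ℂ)) - Complex.exp (-(s:ℂ)))^2 / D ((s:ℂ))))
        = fun s : ℝ => 1/(Complex.I*ℏ)
            * ((Complex.exp (-(s:ℂ)) * (Complex.exp ((s:ℂ)) - Complex.exp (-(s:ℂ))))^2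
              / (Complex.exp (-(s:ℂ))^2 * D ((s:ℂ)))) := by
      funext s
      rw [mul_pow, mul_div_mul_left _ _ (pow_ne_zero 2 (Complex.exp_ne_zero _))]
    rw [heq]
    exact (tendsto_const_nhds (x := 1/(Complex.I*ℏ))).mul ((hEtop.pow 2).div hDtop hL)
  have hAtop : Tendsto (fun t : ℝ => 1/(Complex.I*ℏ)
        * ((Complex.exp ((t:ℂ)/2) - Complex.exp (-(t:ℂ)/2))^2 / D ((t:ℂ)/2))) atTop
      (nhds (1/(Complex.I*ℏ) * ((1:ℂ)^2 / ((1-c)^2 - δ*δ')))) := by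
    have hcomp := hψA.comp hdiv2top
    have heq : ((fun s : ℝ => 1/(Complex.I*ℏ)
          * ((Complex.exp ((s:ℂ)) - Complex.exp (-(s:ℂ)))^2 / D ((s:ℂ)))) ∘ fun t : ℝ => t / 2)
        = fun t : ℝ => 1/(Complex.I*ℏ)
            * ((Complex.exp ((t:ℂ)/2) - Complex.exp (-(t:ℂ)/2))^2 / D ((t:ℂ)/2)) := by
      funext t
      simp only [Function.comp, Complex.ofReal_div, Complex.ofReal_ofNat, neg_div]
    rwa [heq] at hcomp
  -- B coefficient, atTop
  have hψB : Tendsto (fun s : ℝ => 1/(Complex.I*ℏ)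
        * (2 * (Complex.exp ((s:ℂ)) - Complex.exp (-(s:ℂ))) * Δ ((s:ℂ)) / D ((s:ℂ)))) atTop
      (nhds (1/(Complex.I*ℏ) * (2 * (1:ℂ) * (1-c) / ((1-c)^2 - δ*δ')))) := by
    have heq : (fun s : ℝ => 1/(Complex.I*ℏ)
          * (2 * (Complex.exp ((s:ℂ)) - Complex.exp (-(s:ℂ))) * Δ ((s:ℂ)) / D ((s:ℂ))))
        = fun s : ℝ => 1/(Complex.I*ℏ)
            * (2 * (Complex.exp (-(s:ℂ)) * (Complex.exp ((s:ℂ)) - Complex.exp (-(s:ℂ))))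
                * (Complex.exp (-(s:ℂ)) * Δ ((s:ℂ)))
              / (Complex.exp (-(s:ℂ))^2 * D ((s:ℂ)))) := by
      funext s
      rw [show 2 * (Complex.exp (-(s:ℂ)) * (Complex.exp ((s:ℂ)) - Complex.exp (-(s:ℂ))))
                * (Complex.exp (-(s:ℂ)) * Δ ((s:ℂ)))
            = Complex.exp (-(s:ℂ))^2 * (2 * (Complex.exp ((s:ℂ)) - Complex.exp (-(s:ℂ)))
                * Δ ((s:ℂ))) from by ring,
          mul_div_mul_left _ _ (pow_ne_zero 2 (Complex.exp_ne_zero _))]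
    rw [heq]
    exact (tendsto_const_nhds (x := 1/(Complex.I*ℏ))).mul
      ((((tendsto_const_nhds (x := (2:ℂ))).mul hEtop).mul hΔtop).div hDtop hL)
  have hBtop : Tendsto (fun t : ℝ => 1/(Complex.I*ℏ)
        * (2 * (Complex.exp ((t:ℂ)/2) - Complex.exp (-(t:ℂ)/2)) * Δ ((t:ℂ)/2) / D ((t:ℂ)/2))) atTop
      (nhds (1/(Complex.I*ℏ) * (2 * (1:ℂ) * (1-c) / ((1-c)^2 - δ*δ')))) := by
    have hcomp := hψB.comp hdiv2top
    have heq : ((fun s : ℝ => 1/(Complex.I*ℏ)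
          * (2 * (Complex.exp ((s:ℂ)) - Complex.exp (-(s:ℂ))) * Δ ((s:ℂ)) / D ((s:ℂ))))
            ∘ fun t : ℝ => t / 2)
        = fun t : ℝ => 1/(Complex.I*ℏ)
            * (2 * (Complex.exp ((t:ℂ)/2) - Complex.exp (-(t:ℂ)/2)) * Δ ((t:ℂ)/2) / D ((t:ℂ)/2)) := by
      funext t
      simp only [Function.comp, Complex.ofReal_div, Complex.ofReal_ofNat, neg_div]
    rwa [heq] at hcomp
  constructor
  · -- atTop
    have hF := hCtop.prodMk_nhds (hAtop.prodMk_nhds hBtop)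
    have main := unif_param atTop _ _ hF (Hfun δ δ') (Hfun_continuous δ δ') Q hQ
    rw [hfam]
    have hle : (fun p : ℂ × ℂ => 2 / w * Complex.exp ((1 / (Complex.I * ℏ)) *
            (δ' * p.1 ^ 2 + 2 * (1 - c) * p.1 * p.2 + δ * p.2 ^ 2) /
              ((1 - c) ^ 2 - δ * δ')))
        = fun p : ℂ × ℂ => Hfun δ δ'
            (2 / w, 1/(Complex.I*ℏ) * ((1:ℂ)^2 / ((1-c)^2 - δ*δ')),
             1/(Complex.I*ℏ) * (2 * (1:ℂ) * (1-c) / ((1-c)^2 - δ*δ'))) p := by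
      funext p
      unfold Hfun
      simp only
      rw [show (1 / (Complex.I * ℏ)) *
            (δ' * p.1 ^ 2 + 2 * (1 - c) * p.1 * p.2 + δ * p.2 ^ 2) /
              ((1 - c) ^ 2 - δ * δ')
          = (1/(Complex.I*ℏ) * ((1:ℂ)^2 / ((1-c)^2 - δ*δ'))) * (δ' * p.1 ^ 2 + δ * p.2 ^ 2)
            + (1/(Complex.I*ℏ) * (2 * (1:ℂ) * (1-c) / ((1-c)^2 - δ*δ'))) * (p.1 * p.2)
          from by ring]
    rw [hle]
    exact main
  · -- atBot
    have hΦb : Tendsto (fun s : ℝ => Complex.exp ((s:ℂ)) * (2 / g s)) atBot (nhds 0) := by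
      have heq : (fun s : ℝ => Complex.exp ((s:ℂ)) * (2 / g s))
          = fun s : ℝ => (2 * Complex.exp ((2*s : ℝ) : ℂ)) / (Complex.exp ((s:ℂ)) * g s) := by
        funext s
        rw [eq_div_iff (mul_ne_zero (Complex.exp_ne_zero _) (hgne s))]
        have h3 : Complex.exp ((s:ℂ)) * Complex.exp ((s:ℂ)) = Complex.exp (2*(s:ℂ)) := by
          rw [e3 s]; norm_cast
        push_cast
        rw [← h3]
        field_simp [hgne s]
      rw [heq]
      have := ((tendsto_const_nhds (x := (2:ℂ))).mul hz_bot).div hgbot hw'0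
      simpa [Pi.div_def] using this
    have hCbot : Tendsto (fun t : ℝ => Complex.exp ((t:ℂ)/2) * (2 / g (t/2))) atBot (nhds 0) := by
      have hcomp := hΦb.comp hdiv2bot
      have heq : ((fun s : ℝ => Complex.exp ((s:ℂ)) * (2 / g s)) ∘ fun t : ℝ => t / 2)
          = fun t : ℝ => Complex.exp ((t:ℂ)/2) * (2 / g (t/2)) := by
        funext t
        simp only [Function.comp, Complex.ofReal_div, Complex.ofReal_ofNat]
      rwa [heq] at hcomp
    have hψA' : Tendsto (fun s : ℝ => 1/(Complex.I*ℏ)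
          * ((Complex.exp ((s:ℂ)) - Complex.exp (-(s:ℂ)))^2 / D ((s:ℂ)))) atBot
        (nhds (1/(Complex.I*ℏ) * ((-1:ℂ)^2 / ((1+c)^2 - δ*δ')))) := by
      have heq : (fun s : ℝ => 1/(Complex.I*ℏ)
            * ((Complex.exp ((s:ℂ)) - Complex.exp (-(s:ℂ)))^2 / D ((s:ℂ))))
          = fun s : ℝ => 1/(Complex.I*ℏ)
              * ((Complex.exp ((s:ℂ)) * (Complex.exp ((s:ℂ)) - Complex.exp (-(s:ℂ))))^2
                / (Complex.exp ((s:ℂ))^2 * D ((s:ℂ)))) := by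
        funext s
        rw [mul_pow, mul_div_mul_left _ _ (pow_ne_zero 2 (Complex.exp_ne_zero _))]
      rw [heq]
      exact (tendsto_const_nhds (x := 1/(Complex.I*ℏ))).mul ((hEbot.pow 2).div hDbot hL')
    have hAbot : Tendsto (fun t : ℝ => 1/(Complex.I*ℏ)
          * ((Complex.exp ((t:ℂ)/2) - Complex.exp (-(t:ℂ)/2))^2 / D ((t:ℂ)/2))) atBot
        (nhds (1/(Complex.I*ℏ) * ((-1:ℂ)^2 / ((1+c)^2 - δ*δ')))) := by
      have hcomp := hψA'.comp hdiv2bot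
      have heq : ((fun s : ℝ => 1/(Complex.I*ℏ)
            * ((Complex.exp ((s:ℂ)) - Complex.exp (-(s:ℂ)))^2 / D ((s:ℂ)))) ∘ fun t : ℝ => t / 2)
          = fun t : ℝ => 1/(Complex.I*ℏ)
              * ((Complex.exp ((t:ℂ)/2) - Complex.exp (-(t:ℂ)/2))^2 / D ((t:ℂ)/2)) := by
        funext t
        simp only [Function.comp, Complex.ofReal_div, Complex.ofReal_ofNat, neg_div]
      rwa [heq] at hcomp
    have hψB' : Tendsto (fun s : ℝ => 1/(Complex.I*ℏ)
          * (2 * (Complex.exp ((s:ℂ)) - Complex.exp (-(s:ℂ))) * Δ ((s:ℂ)) / D ((s:ℂ)))) atBot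
        (nhds (1/(Complex.I*ℏ) * (2 * (-1:ℂ) * (1+c) / ((1+c)^2 - δ*δ')))) := by
      have heq : (fun s : ℝ => 1/(Complex.I*ℏ)
            * (2 * (Complex.exp ((s:ℂ)) - Complex.exp (-(s:ℂ))) * Δ ((s:ℂ)) / D ((s:ℂ))))
          = fun s : ℝ => 1/(Complex.I*ℏ)
              * (2 * (Complex.exp ((s:ℂ)) * (Complex.exp ((s:ℂ)) - Complex.exp (-(s:ℂ))))
                  * (Complex.exp ((s:ℂ)) * Δ ((s:ℂ)))
                / (Complex.exp ((s:ℂ))^2 * D ((s:ℂ)))) := by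
        funext s
        rw [show 2 * (Complex.exp ((s:ℂ)) * (Complex.exp ((s:ℂ)) - Complex.exp (-(s:ℂ))))
                  * (Complex.exp ((s:ℂ)) * Δ ((s:ℂ)))
              = Complex.exp ((s:ℂ))^2 * (2 * (Complex.exp ((s:ℂ)) - Complex.exp (-(s:ℂ)))
                  * Δ ((s:ℂ))) from by ring,
            mul_div_mul_left _ _ (pow_ne_zero 2 (Complex.exp_ne_zero _))]
      rw [heq]
      exact (tendsto_const_nhds (x := 1/(Complex.I*ℏ))).mul
        ((((tendsto_const_nhds (x := (2:ℂ))).mul hEbot).mul hΔbot).div hDbot hL')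
    have hBbot : Tendsto (fun t : ℝ => 1/(Complex.I*ℏ)
          * (2 * (Complex.exp ((t:ℂ)/2) - Complex.exp (-(t:ℂ)/2)) * Δ ((t:ℂ)/2) / D ((t:ℂ)/2)))
        atBot (nhds (1/(Complex.I*ℏ) * (2 * (-1:ℂ) * (1+c) / ((1+c)^2 - δ*δ')))) := by
      have hcomp := hψB'.comp hdiv2bot
      have heq : ((fun s : ℝ => 1/(Complex.I*ℏ)
            * (2 * (Complex.exp ((s:ℂ)) - Complex.exp (-(s:ℂ))) * Δ ((s:ℂ)) / D ((s:ℂ))))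
              ∘ fun t : ℝ => t / 2)
          = fun t : ℝ => 1/(Complex.I*ℏ)
              * (2 * (Complex.exp ((t:ℂ)/2) - Complex.exp (-(t:ℂ)/2)) * Δ ((t:ℂ)/2) / D ((t:ℂ)/2)) := by
        funext t
        simp only [Function.comp, Complex.ofReal_div, Complex.ofReal_ofNat, neg_div]
      rwa [heq] at hcomp
    have hF := hCbot.prodMk_nhds (hAbot.prodMk_nhds hBbot)
    have main := unif_param atBot _ _ hF (Hfun δ δ') (Hfun_continuous δ δ') Q hQ
    rw [hfam]
    have hle : (fun _ : ℂ × ℂ => (0:ℂ))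
        = fun p : ℂ × ℂ => Hfun δ δ'
            (0, 1/(Complex.I*ℏ) * ((-1:ℂ)^2 / ((1+c)^2 - δ*δ')),
             1/(Complex.I*ℏ) * (2 * (-1:ℂ) * (1+c) / ((1+c)^2 - δ*δ'))) p := by
      funext p
      unfold Hfun
      simp
    rw [hle]
    exact main
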